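/- The function C ↦ ℓ_C defined by ℓ_C = ∫_1^{√(1+e^{2C})} du / √(2C − log(u² − 1)) is strictly increasing on ℝ, and its derivative satisfies dℓ_C/dC = ∫_1^{√(1+e^{2C})} (1+u²)/(u² √(2C − log(u² − 1))) du > 0. -/

import Mathlib

open MeasureTheory intervalIntegral Real

/-- Half-length of the head of the singular solitary wave. -/
noncomputable def ell (C : ℝ) : ℝ :=
  ∫ u in (1 : ℝ)..Real.sqrt (1 + Real.exp (2 * C)),
    (Real.sqrt (2 * C - Real.log (u ^ 2 - 1)))⁻¹

/-- The candidate derivative of `ell`. -/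
noncomputable def ellDeriv (C : ℝ) : ℝ :=
  ∫ u in (1 : ℝ)..Real.sqrt (1 + Real.exp (2 * C)),
    (1 + u ^ 2) / (u ^ 2 * Real.sqrt (2 * C - Real.log (u ^ 2 - 1)))

namespace EllAux

open Set

noncomputable def phi (a t : ℝ) : ℝ := Real.sqrt (1 + a * t ^ 2)

lemma phi_hasDerivAt {a : ℝ} (ha : 0 < a) (t : ℝ) :
    HasDerivAt (phi a) (a * t / Real.sqrt (1 + a * t ^ 2)) t := by
  have h1 : 0 < 1 + a * t ^ 2 := by positivity
  have h2 : HasDerivAt (fun t : ℝ => 1 + a * t ^ 2) (a * (2 * t)) t := by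
    simpa using ((hasDerivAt_pow 2 t).const_mul a).const_add 1
  have := (Real.hasDerivAt_sqrt h1.ne').comp t h2
  refine this.congr_deriv ?_
  symm
  have hs : Real.sqrt (1 + a * t ^ 2) ≠ 0 := by positivity
  field_simp

lemma phi_image {a : ℝ} (ha : 0 < a) :
    phi a '' Ioc 0 1 = Ioc 1 (Real.sqrt (1 + a)) := by
  ext u
  constructor
  · rintro ⟨t, ⟨ht0, ht1⟩, rfl⟩
    constructor
    · exact Real.lt_sqrt_of_sq_lt (by nlinarith [mul_pos ha (pow_pos ht0 2)])
    · apply Real.sqrt_le_sqrt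
      nlinarith [mul_le_mul_of_nonneg_left (show t ^ 2 ≤ 1 by nlinarith) ha.le]
  · rintro ⟨hu1, hub⟩
    have hu2 : u ^ 2 ≤ 1 + a := by
      nlinarith [Real.mul_self_sqrt (show (0:ℝ) ≤ 1 + a by positivity), Real.sqrt_nonneg (1+a)]
    refine ⟨Real.sqrt ((u ^ 2 - 1) / a), ⟨?_, ?_⟩, ?_⟩
    · exact Real.sqrt_pos.2 (div_pos (by nlinarith) ha)
    · have := Real.sqrt_le_sqrt (show (u ^ 2 - 1) / a ≤ 1 by rw [div_le_one ha]; linarith)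
      simpa using this
    · unfold phi
      rw [Real.sq_sqrt (div_nonneg (by nlinarith) ha.le), mul_div_cancel₀ _ ha.ne']
      simp only [add_sub_cancel]
      exact Real.sqrt_sq (by linarith)

lemma phi_injOn {a : ℝ} (ha : 0 < a) : InjOn (phi a) (Ioc 0 1) := by
  intro s hs t ht h
  unfold phi at h
  have := congrArg (fun x => x ^ 2) h
  simp only [Real.sq_sqrt (by positivity : (0:ℝ) ≤ 1 + a * s ^ 2),
    Real.sq_sqrt (by positivity : (0:ℝ) ≤ 1 + a * t ^ 2)] at this
  have h2 : s ^ 2 = t ^ 2 := by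
    have := this
    exact mul_left_cancel₀ ha.ne' (by linarith)
  nlinarith [hs.1, ht.1]

/-- Change of variables: generic form. -/
lemma cov {a : ℝ} (ha : 0 < a) (g : ℝ → ℝ) :
    ∫ u in Ioc 1 (Real.sqrt (1 + a)), g u
      = ∫ t in Ioc 0 1, (a * t / Real.sqrt (1 + a * t ^ 2)) * g (Real.sqrt (1 + a * t ^ 2)) := by
  rw [← phi_image ha, integral_image_eq_integral_abs_deriv_smul measurableSet_Ioc
    (fun t _ => (phi_hasDerivAt ha t).hasDerivWithinAt) (phi_injOn ha) g]
  apply setIntegral_congr_fun measurableSet_Ioc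
  intro t ht
  have h0 : 0 ≤ a * t / Real.sqrt (1 + a * t ^ 2) := by
    have := ht.1
    positivity
  simp only [smul_eq_mul, phi]
  rw [abs_of_nonneg h0]

noncomputable def FF (C t : ℝ) : ℝ :=
  Real.exp (2*C) * t / Real.sqrt (1 + Real.exp (2*C) * t ^ 2) * (Real.sqrt (-(2 * Real.log t)))⁻¹

noncomputable def FF' (C t : ℝ) : ℝ :=
  Real.exp (2*C) * (2 + Real.exp (2*C) * t ^ 2) * t /
    ((1 + Real.exp (2*C) * t ^ 2) * Real.sqrt (1 + Real.exp (2*C) * t ^ 2)) *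
    (Real.sqrt (-(2 * Real.log t)))⁻¹

lemma exp2_hasDerivAt (x : ℝ) :
    HasDerivAt (fun C : ℝ => Real.exp (2*C)) (Real.exp (2*x) * 2) x := by
  have := (Real.hasDerivAt_exp (2*x)).comp x ((hasDerivAt_id x).const_mul 2)
  exact this.congr_deriv (by ring)

lemma FF_hasDerivAt (t C : ℝ) : HasDerivAt (fun C => FF C t) (FF' C t) C := by
  have hpos : 0 < 1 + Real.exp (2*C) * t ^ 2 := by positivity
  have hu : HasDerivAt (fun C : ℝ => Real.exp (2*C) * t) (Real.exp (2*C) * 2 * t) C :=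
    (exp2_hasDerivAt C).mul_const t
  have hin : HasDerivAt (fun C : ℝ => 1 + Real.exp (2*C) * t ^ 2)
      (Real.exp (2*C) * 2 * t ^ 2) C := by
    simpa using (((exp2_hasDerivAt C).mul_const (t ^ 2)).const_add 1)
  have hv := (Real.hasDerivAt_sqrt hpos.ne').comp C hin
  have hvne : Real.sqrt (1 + Real.exp (2*C) * t ^ 2) ≠ 0 := by positivity
  have hdiv := (hu.div hv hvne).mul_const (Real.sqrt (-(2 * Real.log t)))⁻¹
  refine hdiv.congr_deriv ?_
  symm
  have hq : Real.sqrt (1 + Real.exp (2*C) * t ^ 2) * Real.sqrt (1 + Real.exp (2*C) * t ^ 2)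
      = 1 + Real.exp (2*C) * t ^ 2 := Real.mul_self_sqrt hpos.le
  unfold FF'
  congr 1
  simp only [Function.comp]
  field_simp
  linear_combination (-(t ^ 3 * Real.exp (2*C))) * hq

lemma boundfun_integrable :
    IntegrableOn (fun t : ℝ => (Real.sqrt (-(2 * Real.log t)))⁻¹) (Ioc 0 1) := by
  have hB : IntervalIntegrable (fun t : ℝ => (1 - t) ^ (-(1/2) : ℝ)) volume 0 1 := by
    have h := (intervalIntegrable_rpow' (show (-1:ℝ) < -(1/2) by norm_num)
      (a := (0:ℝ)) (b := (1:ℝ))).comp_sub_left 1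
    simpa using h.symm
  have hBint : IntegrableOn (fun t : ℝ => (1 - t) ^ (-(1/2) : ℝ)) (Ioc 0 1) := by
    rw [← intervalIntegrable_iff_integrableOn_Ioc_of_le (by norm_num : (0:ℝ) ≤ 1)]
    exact hB
  apply Integrable.mono' hBint
  · exact ((Real.continuous_sqrt.measurable.comp
      ((Real.measurable_log.const_mul 2).neg)).inv).aestronglyMeasurable
  · filter_upwards [ae_restrict_mem measurableSet_Ioc] with t ht
    rcases eq_or_lt_of_le ht.2 with h1 | h1
    · subst h1
      simp
    · have ht0 := ht.1
      have hlog : 1 - t ≤ -Real.log t := by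
        have := Real.log_le_sub_one_of_pos ht0
        linarith
      have h1t : 0 < 1 - t := by linarith
      have key : Real.sqrt (2 * (1 - t)) ≤ Real.sqrt (-(2 * Real.log t)) := by
        apply Real.sqrt_le_sqrt; linarith
      have hpos2 : 0 < Real.sqrt (2 * (1 - t)) := Real.sqrt_pos.2 (by linarith)
      rw [Real.norm_eq_abs, abs_of_nonneg (by positivity)]
      calc (Real.sqrt (-(2 * Real.log t)))⁻¹ ≤ (Real.sqrt (2 * (1 - t)))⁻¹ :=
            inv_anti₀ hpos2 key
        _ ≤ (1 - t) ^ (-(1/2) : ℝ) := by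
            rw [show (2:ℝ) * (1 - t) = (1-t) * 2 by ring, Real.sqrt_mul h1t.le,
              Real.sqrt_eq_rpow, Real.rpow_neg h1t.le, mul_inv]
            refine mul_le_of_le_one_right (by positivity) ?_
            rw [inv_le_one₀ (by positivity : (0:ℝ) < Real.sqrt 2)]
            exact (Real.le_sqrt zero_le_one (by norm_num)).2 (by norm_num)

lemma sqrt_one_le (C : ℝ) : (1:ℝ) ≤ Real.sqrt (1 + Real.exp (2 * C)) :=
  (Real.le_sqrt zero_le_one (by positivity)).2 (by nlinarith [Real.exp_pos (2*C)])

lemma ell_eq (C : ℝ) : ell C = ∫ t in Ioc 0 1, FF C t := by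
  have ha : 0 < Real.exp (2*C) := Real.exp_pos _
  rw [ell, intervalIntegral.integral_of_le (sqrt_one_le C)]
  rw [show (2:ℝ) * C = 2 * C from rfl]
  rw [cov ha]
  apply setIntegral_congr_fun measurableSet_Ioc
  intro t ht
  have hq : 0 ≤ 1 + Real.exp (2*C) * t ^ 2 := by positivity
  have harg : 2 * C - Real.log (Real.sqrt (1 + Real.exp (2*C) * t ^ 2) ^ 2 - 1)
      = -(2 * Real.log t) := by
    rw [Real.sq_sqrt hq, add_sub_cancel_left,
      Real.log_mul (Real.exp_ne_zero _) (pow_ne_zero 2 ht.1.ne'),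
      Real.log_exp, Real.log_pow]
    push_cast
    ring
  simp only [harg, FF]

lemma ellDeriv_eq (C : ℝ) : ellDeriv C = ∫ t in Ioc 0 1, FF' C t := by
  have ha : 0 < Real.exp (2*C) := Real.exp_pos _
  rw [ellDeriv, intervalIntegral.integral_of_le (sqrt_one_le C), cov ha]
  apply setIntegral_congr_fun measurableSet_Ioc
  intro t ht
  have hqpos : 0 < 1 + Real.exp (2*C) * t ^ 2 := by positivity
  have hs : Real.sqrt (1 + Real.exp (2*C) * t ^ 2) ≠ 0 := by positivity
  have harg : 2 * C - Real.log (1 + Real.exp (2*C) * t ^ 2 - 1) = -(2 * Real.log t) := by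
    rw [add_sub_cancel_left,
      Real.log_mul (Real.exp_ne_zero _) (pow_ne_zero 2 ht.1.ne'),
      Real.log_exp, Real.log_pow]
    push_cast
    ring
  simp only [Real.sq_sqrt hqpos.le, harg, FF']
  rw [div_mul_eq_div_div, div_eq_mul_inv _ (Real.sqrt (-(2 * Real.log t))), ← mul_assoc]
  congr 1
  field_simp
  ring

lemma FF_meas (x : ℝ) : Measurable (FF x) := by
  have m1 : Measurable fun t : ℝ => (Real.sqrt (-(2 * Real.log t)))⁻¹ :=
    ((Real.continuous_sqrt.measurable.comp ((Real.measurable_log.const_mul 2).neg)).inv)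
  have m2 : Continuous fun t : ℝ =>
      Real.exp (2*x) * t / Real.sqrt (1 + Real.exp (2*x) * t ^ 2) := by
    apply Continuous.div (continuous_const.mul continuous_id)
      (Real.continuous_sqrt.comp (continuous_const.add (continuous_const.mul (continuous_pow 2))))
    intro t
    show Real.sqrt (1 + Real.exp (2*x) * t ^ 2) ≠ 0
    positivity
  exact m2.measurable.mul m1

lemma FF'_meas (x : ℝ) : Measurable (FF' x) := by
  have m1 : Measurable fun t : ℝ => (Real.sqrt (-(2 * Real.log t)))⁻¹ :=
    ((Real.continuous_sqrt.measurable.comp ((Real.measurable_log.const_mul 2).neg)).inv)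
  have m2 : Continuous fun t : ℝ =>
      Real.exp (2*x) * (2 + Real.exp (2*x) * t ^ 2) * t /
        ((1 + Real.exp (2*x) * t ^ 2) * Real.sqrt (1 + Real.exp (2*x) * t ^ 2)) := by
    have hc : Continuous fun t : ℝ => 1 + Real.exp (2*x) * t ^ 2 :=
      continuous_const.add (continuous_const.mul (continuous_pow 2))
    apply Continuous.div
      (((continuous_const.mul (continuous_const.add (continuous_const.mul (continuous_pow 2)))).mul
        continuous_id))
      (hc.mul (Real.continuous_sqrt.comp hc))
    intro t
    show (1 + Real.exp (2*x) * t ^ 2) * Real.sqrt (1 + Real.exp (2*x) * t ^ 2) ≠ 0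
    positivity
  exact m2.measurable.mul m1

lemma key (C₀ : ℝ) : IntegrableOn (FF' C₀) (Ioc 0 1) ∧
    HasDerivAt (fun C => ∫ t in Ioc 0 1, FF C t) (∫ t in Ioc 0 1, FF' C₀ t) C₀ := by
  set A := Real.exp (2*C₀+2) with hA
  have hApos : 0 < A := Real.exp_pos _
  have hbound_int : Integrable (fun t : ℝ => A * (2+A) * (Real.sqrt (-(2 * Real.log t)))⁻¹)
      (volume.restrict (Ioc 0 1)) := boundfun_integrable.const_mul _
  have hle : ∀ x : ℝ, x ∈ Metric.ball C₀ 1 → Real.exp (2*x) ≤ A := by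
    intro x hx
    rw [Metric.mem_ball, Real.dist_eq, abs_lt] at hx
    exact Real.exp_le_exp.2 (by linarith [hx.2])
  have hmain := hasDerivAt_integral_of_dominated_loc_of_deriv_le
    (μ := volume.restrict (Ioc 0 1)) (x₀ := C₀) (F := FF) (F' := FF')
    (bound := fun t => A * (2+A) * (Real.sqrt (-(2 * Real.log t)))⁻¹)
    (Metric.ball_mem_nhds C₀ one_pos)
    (Filter.Eventually.of_forall fun x => (FF_meas x).aestronglyMeasurable)
    ?_ (FF'_meas C₀).aestronglyMeasurable ?_ hbound_int ?_
  · exact hmain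
  · -- Integrable (FF C₀)
    apply Integrable.mono' hbound_int (FF_meas C₀).aestronglyMeasurable
    filter_upwards [ae_restrict_mem measurableSet_Ioc] with t ht
    have ht0 := ht.1
    have ht1 := ht.2
    have he : Real.exp (2*C₀) ≤ A := Real.exp_le_exp.2 (by linarith)
    have hepos := Real.exp_pos (2*C₀)
    have hq1 : (1:ℝ) ≤ 1 + Real.exp (2*C₀) * t ^ 2 := by nlinarith
    have hs1 : (1:ℝ) ≤ Real.sqrt (1 + Real.exp (2*C₀) * t ^ 2) :=
      (Real.le_sqrt zero_le_one (by positivity)).2 (by nlinarith)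
    have hFnn : 0 ≤ FF C₀ t := by
      unfold FF
      have : (0:ℝ) ≤ t := ht0.le
      positivity
    rw [Real.norm_eq_abs, abs_of_nonneg hFnn]
    unfold FF
    apply mul_le_mul_of_nonneg_right _ (by positivity)
    calc Real.exp (2*C₀) * t / Real.sqrt (1 + Real.exp (2*C₀) * t ^ 2)
        ≤ Real.exp (2*C₀) * t := div_le_self (by positivity) hs1
      _ ≤ Real.exp (2*C₀) := mul_le_of_le_one_right (by positivity) ht1
      _ ≤ A * (2+A) := by nlinarith
  · -- bound on FF'
    filter_upwards [ae_restrict_mem measurableSet_Ioc] with t ht x hx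
    have ht0 := ht.1
    have ht1 := ht.2
    have he : Real.exp (2*x) ≤ A := hle x hx
    have hepos := Real.exp_pos (2*x)
    have hq1 : (1:ℝ) ≤ 1 + Real.exp (2*x) * t ^ 2 := by nlinarith
    have hs1 : (1:ℝ) ≤ Real.sqrt (1 + Real.exp (2*x) * t ^ 2) :=
      (Real.le_sqrt zero_le_one (by positivity)).2 (by nlinarith)
    have hFnn : 0 ≤ FF' x t := by
      unfold FF'
      have : (0:ℝ) ≤ t := ht0.le
      positivity
    rw [Real.norm_eq_abs, abs_of_nonneg hFnn]
    unfold FF'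
    apply mul_le_mul_of_nonneg_right _ (by positivity)
    calc Real.exp (2*x) * (2 + Real.exp (2*x) * t ^ 2) * t /
          ((1 + Real.exp (2*x) * t ^ 2) * Real.sqrt (1 + Real.exp (2*x) * t ^ 2))
        ≤ Real.exp (2*x) * (2 + Real.exp (2*x) * t ^ 2) * t := by
          apply div_le_self (by positivity)
          nlinarith [Real.sqrt_nonneg (1 + Real.exp (2*x) * t ^ 2)]
      _ ≤ Real.exp (2*x) * (2 + Real.exp (2*x) * t ^ 2) :=
          mul_le_of_le_one_right (by positivity) ht1
      _ ≤ A * (2+A) := by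
          have ht2 : t ^ 2 ≤ 1 := pow_le_one₀ ht0.le ht1
          nlinarith [mul_le_mul he (show Real.exp (2*x) * t ^ 2 ≤ A by nlinarith)
            (by positivity) hApos.le]
  · exact Filter.Eventually.of_forall fun t x _ => FF_hasDerivAt t x

end EllAux

open EllAux

theorem ell_strictMono_and_deriv :
    StrictMono ell ∧ ∀ C : ℝ, HasDerivAt ell (ellDeriv C) C ∧ 0 < ellDeriv C := by
  have hmain : ∀ C : ℝ, HasDerivAt ell (ellDeriv C) C ∧ 0 < ellDeriv C := by
    intro C₀
    obtain ⟨hint, hderiv⟩ := key C₀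
    constructor
    · have hfe : ell = fun C => ∫ t in Set.Ioc (0:ℝ) 1, FF C t := funext ell_eq
      rw [hfe, ellDeriv_eq]
      exact hderiv
    · rw [ellDeriv_eq, ← intervalIntegral.integral_of_le zero_le_one]
      apply intervalIntegral.intervalIntegral_pos_of_pos_on
      · rw [intervalIntegrable_iff_integrableOn_Ioc_of_le zero_le_one]
        exact hint
      · intro t ht
        have hS : 0 < Real.sqrt (-(2*Real.log t)) :=
          Real.sqrt_pos.2 (by nlinarith [Real.log_neg ht.1 ht.2])
        unfold FF'
        have hnum : 0 < Real.exp (2*C₀) * (2 + Real.exp (2*C₀) * t ^ 2) * t :=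
          mul_pos (by positivity) ht.1
        exact mul_pos (div_pos hnum (by positivity)) (inv_pos.2 hS)
      · norm_num
  refine ⟨strictMono_of_deriv_pos fun x => ?_, hmain⟩
  rw [(hmain x).1.deriv]
  exact (hmain x).2
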